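/- arXiv:1102.1088 — 2 statements merged into one kernel-verified Lean document; each statement's English description precedes it below -/
import Mathlib

section
/- Let (A, τ) be a subdirectly irreducible SMMV-algebra and a ∈ A. Then there exist uniquely determined b ∈ τ(A) and c ∈ F_τ(A) such that exactly one of the following holds: (a) a = b ⊙ c and c is the greatest element with this property; or (b) a = c → b and b < c < 1. -/
/-- An MV-algebra `(A, ⊕, ¬, 0)`. -/
class MV (A : Type*) extends Zero A where
  oplus : A → A → A
  mvneg : A → A
  oplus_assoc : ∀ x y z : A, oplus (oplus x y) z = oplus x (oplus y z)
  oplus_comm : ∀ x y : A, oplus x y = oplus y x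
  oplus_zero : ∀ x : A, oplus x 0 = x
  mvneg_mvneg : ∀ x : A, mvneg (mvneg x) = x
  oplus_top : ∀ x : A, oplus x (mvneg 0) = mvneg 0
  luk : ∀ x y : A, oplus (mvneg (oplus (mvneg x) y)) y = oplus (mvneg (oplus (mvneg y) x)) x

namespace MV

variable {A : Type*} [MV A]

/-- The top element `1 = ¬0`. -/
def top : A := mvneg 0
/-- `x → y := ¬x ⊕ y`. -/
def imp (x y : A) : A := oplus (mvneg x) y
/-- `x ⊙ y := ¬(¬x ⊕ ¬y)`. -/
def odot (x y : A) : A := mvneg (oplus (mvneg x) (mvneg y))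
/-- `x ⊖ y := ¬(¬x ⊕ y)`. -/
def ominus (x y : A) : A := mvneg (oplus (mvneg x) y)
/-- Lattice join `x ∨ y := (x → y) → y`. -/
def mvsup (x y : A) : A := imp (imp x y) y
/-- Lattice meet `x ∧ y := x ⊙ (x → y)`. -/
def mvinf (x y : A) : A := odot x (imp x y)
/-- The lattice order: `x ≤ y` iff `x → y = 1`. -/
def mvle (x y : A) : Prop := imp x y = top
/-- Strict order. -/
def mvlt (x y : A) : Prop := mvle x y ∧ x ≠ y

/-- `(A, τ)` is an SMV-algebra. -/
structure IsSMV (τ : A → A) : Prop where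
  map_top : τ top = top
  tau_oplus : ∀ x y : A, τ (oplus x y) = oplus (τ x) (τ (ominus y (odot x y)))
  map_neg : ∀ x : A, τ (mvneg x) = mvneg (τ x)
  tau_fix : ∀ x y : A, τ (oplus (τ x) (τ y)) = oplus (τ x) (τ y)

/-- `(A, τ)` is a state morphism MV-algebra. -/
def IsSMMV (τ : A → A) : Prop := IsSMV τ ∧ ∀ x y : A, τ (oplus x y) = oplus (τ x) (τ y)

/-- An MV-filter. -/
structure IsFilter (F : Set A) : Prop where
  top_mem : top ∈ F
  mp : ∀ a b : A, a ∈ F → imp a b ∈ F → b ∈ F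

/-- A `τ`-filter: an MV-filter closed under `τ`. -/
def IsTauFilter (τ : A → A) (F : Set A) : Prop := IsFilter F ∧ ∀ a ∈ F, τ a ∈ F

/-- Subdirect irreducibility of an SMV-algebra: there is a minimum nontrivial `τ`-filter. -/
def SubdirIrrSMV (τ : A → A) : Prop :=
  ∃ F : Set A, IsTauFilter τ F ∧ F ≠ {top} ∧
    ∀ G : Set A, IsTauFilter τ G → G ≠ {top} → F ⊆ G

/-- A filter of the subalgebra/subhoop with universe `S`. -/
def IsFilterOn (S F : Set A) : Prop :=
  F ⊆ S ∧ top ∈ F ∧ ∀ a b : A, a ∈ F → b ∈ S → imp a b ∈ F → b ∈ F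

/-- Subdirect irreducibility of the subalgebra/subhoop with universe `S`:
there is a minimum nontrivial filter on `S`. -/
def SubdirIrrOn (S : Set A) : Prop :=
  ∃ F : Set A, IsFilterOn S F ∧ F ≠ {top} ∧
    ∀ G : Set A, IsFilterOn S G → G ≠ {top} → F ⊆ G

/-- The set `F_τ(A) = {a : τ a = 1}`. -/
def tauKernel (τ : A → A) : Set A := {a : A | τ a = top}

/-- Homomorphisms of MV-algebras. -/
structure IsMVHom {A B : Type*} [MV A] [MV B] (f : A → B) : Prop where
  map_oplus : ∀ x y : A, f (oplus x y) = oplus (f x) (f y)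
  map_neg : ∀ x : A, f (mvneg x) = mvneg (f x)
  map_zero : f 0 = 0

end MV

open MV

instance MV.instProd {A B : Type*} [MV A] [MV B] : MV (A × B) where
  oplus x y := (oplus x.1 y.1, oplus x.2 y.2)
  mvneg x := (mvneg x.1, mvneg x.2)
  oplus_assoc x y z := by simp [oplus_assoc]
  oplus_comm x y := by simp [oplus_comm x.1 y.1, oplus_comm x.2 y.2]
  oplus_zero x := by simp [oplus_zero]
  mvneg_mvneg x := by simp [mvneg_mvneg]
  oplus_top x := by simp [oplus_top]
  luk x y := by simp [luk]

instance MV.instPi {I : Type*} {A : I → Type*} [∀ i, MV (A i)] : MV (∀ i, A i) where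
  oplus x y i := oplus (x i) (y i)
  mvneg x i := mvneg (x i)
  oplus_assoc x y z := by funext i; simp [oplus_assoc]
  oplus_comm x y := by funext i; exact oplus_comm _ _
  oplus_zero x := by funext i; exact oplus_zero _
  mvneg_mvneg x := by funext i; exact mvneg_mvneg _
  oplus_top x := by funext i; exact oplus_top _
  luk x y := by funext i; exact luk _ _

namespace MV
variable {A : Type*} [MV A]

variable {A : Type*} [MV A]


lemma zero_oplus (x : A) : oplus 0 x = x := by rw [oplus_comm, oplus_zero]
lemma oplus_top' (x : A) : oplus x (top : A) = top := oplus_top x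
lemma top_oplus (x : A) : oplus (top : A) x = top := by rw [oplus_comm]; exact oplus_top x
lemma neg_top : mvneg (top : A) = 0 := mvneg_mvneg 0
lemma oplus_left_comm (x y z : A) : oplus x (oplus y z) = oplus y (oplus x z) := by
  rw [← oplus_assoc, oplus_comm x y, oplus_assoc]

lemma imp_self (x : A) : imp x x = top := by
  have h := luk x (top : A)
  rw [oplus_top', neg_top, zero_oplus] at h
  exact h.symm

lemma neg_oplus_self (x : A) : oplus (mvneg x) x = top := imp_self x
lemma oplus_neg_self (x : A) : oplus x (mvneg x) = top := by rw [oplus_comm]; exact imp_self x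

lemma mvle_refl (x : A) : mvle x x := imp_self x
lemma mvle_top (x : A) : mvle x top := oplus_top' (mvneg x)

lemma mvle_antisymm {x y : A} (h1 : mvle x y) (h2 : mvle y x) : x = y := by
  have h := luk x y
  unfold mvle imp at h1 h2
  rw [h1, h2, neg_top, zero_oplus, zero_oplus] at h
  exact h.symm

lemma le_of_eq_oplus {x y u : A} (h : y = oplus u x) : mvle x y := by
  unfold mvle imp
  rw [h, oplus_comm u x, ← oplus_assoc, neg_oplus_self, top_oplus]

lemma exists_of_le {x y : A} (h : mvle x y) : y = oplus (ominus y x) x := by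
  have hl := luk y x
  unfold mvle imp at h
  rw [h, neg_top, zero_oplus] at hl
  exact hl.symm

lemma mvle_trans {x y z : A} (h1 : mvle x y) (h2 : mvle y z) : mvle x z := by
  have e2 := exists_of_le h2
  unfold mvle imp at *
  rw [e2, oplus_left_comm, h1, oplus_top']

lemma le_oplus_self (x u : A) : mvle x (oplus u x) := le_of_eq_oplus rfl

lemma oplus_mono_left {x y : A} (c : A) (h : mvle x y) : mvle (oplus x c) (oplus y c) := by
  have e := exists_of_le h
  unfold mvle imp
  rw [e, oplus_assoc (ominus y x) x c, oplus_left_comm, neg_oplus_self, oplus_top']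

lemma mvle_neg {x y : A} (h : mvle x y) : mvle (mvneg y) (mvneg x) := by
  unfold mvle imp at *
  rw [mvneg_mvneg, oplus_comm]
  exact h

lemma imp_le_imp_left {x y : A} (c : A) (h : mvle x y) : mvle (imp y c) (imp x c) :=
  oplus_mono_left c (mvle_neg h)

lemma odot_imp_eq (x y z : A) : imp (odot x y) z = imp y (imp x z) := by
  unfold imp odot
  rw [mvneg_mvneg, oplus_assoc, oplus_left_comm]

lemma resid {x y z : A} : mvle (odot x y) z ↔ mvle y (imp x z) := by
  unfold mvle
  rw [odot_imp_eq]

lemma odot_comm (x y : A) : odot x y = odot y x := by unfold odot; rw [oplus_comm]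
lemma odot_assoc (x y z : A) : odot (odot x y) z = odot x (odot y z) := by
  unfold odot; rw [mvneg_mvneg, mvneg_mvneg, oplus_assoc]
lemma odot_top (x : A) : odot x top = x := by
  unfold odot; rw [neg_top, oplus_zero, mvneg_mvneg]
lemma top_odot (x : A) : odot top x = x := by rw [odot_comm, odot_top]

lemma odot_le_right (x y : A) : mvle (odot x y) y := resid.mpr (le_oplus_self y (mvneg x))
lemma odot_le_left (x y : A) : mvle (odot x y) x := by rw [odot_comm]; exact odot_le_right _ _

lemma odot_mono_left {x y : A} (c : A) (h : mvle x y) : mvle (odot x c) (odot y c) :=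
  mvle_neg (oplus_mono_left (mvneg c) (mvle_neg h))

lemma odot_mono_right {x y : A} (c : A) (h : mvle x y) : mvle (odot c x) (odot c y) := by
  rw [odot_comm c x, odot_comm c y]; exact odot_mono_left _ h

lemma odot_imp_le (x y : A) : mvle (odot x (imp x y)) y := resid.mpr (mvle_refl _)

lemma div_eq {a b : A} (h : mvle a b) : odot b (imp b a) = a := by
  have hl := luk (mvneg a) (mvneg b)
  rw [mvneg_mvneg, mvneg_mvneg] at hl
  unfold mvle imp at h
  rw [oplus_comm b (mvneg a), h, neg_top, zero_oplus] at hl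
  show mvneg (oplus (mvneg b) (mvneg (oplus (mvneg b) a))) = a
  rw [oplus_comm (mvneg b) a, oplus_comm (mvneg b) (mvneg (oplus a (mvneg b))), hl, mvneg_mvneg]

lemma mvsup_comm (x y : A) : mvsup x y = mvsup y x := luk x y
lemma le_mvsup_right (x y : A) : mvle y (mvsup x y) := le_oplus_self _ _
lemma le_mvsup_left (x y : A) : mvle x (mvsup x y) := by
  rw [mvsup_comm]; exact le_mvsup_right _ _
lemma imp_top_left (x : A) : imp (top : A) x = x := by
  unfold imp; rw [neg_top, zero_oplus]
lemma mvsup_eq_left {x y : A} (h : mvle y x) : mvsup x y = x := by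
  rw [mvsup_comm]
  show imp (imp y x) x = x
  rw [show imp y x = top from h, imp_top_left]
lemma mvsup_le {x y z : A} (h1 : mvle x z) (h2 : mvle y z) : mvle (mvsup x y) z := by
  have ha : mvle (mvsup x y) (mvsup z y) := imp_le_imp_left y (imp_le_imp_left y h1)
  have hb : mvsup z y = z := mvsup_eq_left h2
  rw [hb] at ha
  exact ha
lemma eq_top_of_top_le {x : A} (h : mvle top x) : x = top :=
  (mvle_antisymm h (mvle_top x)).symm

lemma odot_sup_le (x y z : A) :
    mvle (odot x (mvsup y z)) (mvsup (odot x y) (odot x z)) := by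
  refine resid.mpr (mvsup_le ?_ ?_)
  · exact resid.mp (le_mvsup_left _ _)
  · exact resid.mp (le_mvsup_right _ _)

def upow (u : A) : ℕ → A
  | 0 => top
  | n+1 => odot (upow u n) u

lemma upow_zero (u : A) : upow u 0 = top := rfl
lemma upow_one (u : A) : upow u 1 = u := top_odot u
lemma upow_succ_le (u : A) (n : ℕ) : mvle (upow u (n+1)) (upow u n) := odot_le_left _ _
lemma upow_le_upow {u : A} {n m : ℕ} (h : n ≤ m) : mvle (upow u m) (upow u n) := by
  induction h with
  | refl => exact mvle_refl _
  | step _ ih => exact mvle_trans (upow_succ_le _ _) ih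

lemma upow_add (u : A) (n m : ℕ) : upow u (n + m) = odot (upow u n) (upow u m) := by
  induction m with
  | zero => rw [Nat.add_zero, upow_zero, odot_top]
  | succ m ih =>
      show upow u (n + m + 1) = _
      rw [show upow u (n+m+1) = odot (upow u (n+m)) u from rfl, ih, odot_assoc]
      rfl

lemma upow_sup {u v : A} (h : mvsup u v = top) : ∀ n, mvsup (upow u n) v = top := by
  intro n
  induction n with
  | zero => exact mvsup_eq_left (mvle_top v)
  | succ n ih =>
      have h1 : mvle (odot (mvsup u v) (mvsup (upow u n) v))
          (mvsup (odot (mvsup u v) (upow u n)) (odot (mvsup u v) v)) := odot_sup_le _ _ _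
      have h2 : mvle (odot (mvsup u v) (upow u n)) (mvsup (upow u (n+1)) v) := by
        rw [odot_comm]
        refine mvle_trans (odot_sup_le _ _ _) (mvsup_le ?_ ?_)
        · exact le_mvsup_left _ _
        · exact mvle_trans (odot_le_right _ _) (le_mvsup_right _ _)
      have h3 : mvle (odot (mvsup u v) v) (mvsup (upow u (n+1)) v) :=
        mvle_trans (odot_le_right _ _) (le_mvsup_right _ _)
      have h4 := mvle_trans h1 (mvsup_le h2 h3)
      rw [h, ih, odot_top] at h4
      exact eq_top_of_top_le h4

lemma ominus_eq_odot (x y : A) : ominus x y = odot x (mvneg y) := by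
  unfold ominus odot; rw [mvneg_mvneg]

lemma neg_odot_neg (x y : A) : mvneg (odot x (mvneg y)) = imp x y := by
  unfold odot imp; rw [mvneg_mvneg, mvneg_mvneg]

lemma ominus_le_neg (x y : A) : mvle (ominus x y) (mvneg y) :=
  mvle_neg (le_oplus_self y (mvneg x))

lemma absorb {X Y : A} (h : mvle X (mvneg Y)) : odot (oplus X Y) (mvneg Y) = X := by
  have hd := div_eq h
  -- hd : odot (mvneg Y) (imp (mvneg Y) X) = X
  rw [show imp (mvneg Y) X = oplus Y X by unfold imp; rw [mvneg_mvneg]] at hd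
  rw [odot_comm, oplus_comm]
  exact hd

lemma ominus_mvsup (x y : A) : ominus (mvsup x y) y = ominus x y := by
  have h := absorb (X := ominus x y) (Y := y) (ominus_le_neg x y)
  rw [← h, ominus_eq_odot]
  rfl

lemma key_aux (x y : A) :
    ominus (ominus (mvsup x y) y) (ominus (mvsup x y) x) = ominus x y := by
  rw [ominus_eq_odot, ominus_eq_odot (mvsup x y) y, ominus_eq_odot (mvsup x y) x,
    neg_odot_neg, odot_comm (mvsup x y) (mvneg y), odot_assoc,
    div_eq (le_mvsup_left x y), odot_comm, ← ominus_eq_odot]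

lemma key_ominus (x y : A) : ominus (ominus x y) (ominus y x) = ominus x y := by
  have h1 := ominus_mvsup x y
  have h2 : ominus (mvsup x y) x = ominus y x := by rw [mvsup_comm]; exact ominus_mvsup y x
  calc ominus (ominus x y) (ominus y x)
      = ominus (ominus (mvsup x y) y) (ominus (mvsup x y) x) := by rw [h1, h2]
    _ = ominus x y := key_aux x y

lemma prelin (x y : A) : mvsup (imp x y) (imp y x) = top := by
  have hkey := key_ominus y x
  show oplus (mvneg (oplus (mvneg (imp x y)) (imp y x))) (imp y x) = top
  have e1 : mvneg (imp x y) = ominus x y := rfl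
  have e2 : imp y x = mvneg (ominus y x) := (mvneg_mvneg _).symm
  rw [e1, e2, oplus_comm (ominus x y) (mvneg (ominus y x)),
    show mvneg (oplus (mvneg (ominus y x)) (ominus x y)) = ominus (ominus y x) (ominus x y) from rfl,
    hkey, oplus_comm]
  exact imp_self _


lemma tau_zero {τ : A → A} (h : IsSMMV τ) : τ 0 = 0 := by
  have hx := h.1.map_neg top
  rw [h.1.map_top] at hx
  rw [neg_top] at hx
  exact hx

lemma tau_idem {τ : A → A} (h : IsSMMV τ) (x : A) : τ (τ x) = τ x := by
  have hf := h.1.tau_fix x 0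
  rw [tau_zero h, oplus_zero] at hf
  exact hf

lemma tau_imp {τ : A → A} (h : IsSMMV τ) (x y : A) : τ (imp x y) = imp (τ x) (τ y) := by
  unfold imp; rw [h.2, h.1.map_neg]

lemma tau_odot {τ : A → A} (h : IsSMMV τ) (x y : A) : τ (odot x y) = odot (τ x) (τ y) := by
  unfold odot; rw [h.1.map_neg, h.2, h.1.map_neg, h.1.map_neg]

lemma tau_mono {τ : A → A} (h : IsSMMV τ) {x y : A} (hx : mvle x y) : mvle (τ x) (τ y) := by
  unfold mvle at *
  rw [← tau_imp h, hx]
  exact h.1.map_top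

lemma tau_upow {τ : A → A} (h : IsSMMV τ) {u : A} (hu : τ u = top) (n : ℕ) :
    τ (upow u n) = top := by
  induction n with
  | zero => exact h.1.map_top
  | succ n ih =>
      show τ (odot (upow u n) u) = top
      rw [tau_odot h, ih, hu, odot_top]

lemma genFilter_tauFilter {τ : A → A} (h : IsSMMV τ) {u : A} (hu : τ u = top) :
    IsTauFilter τ {x : A | ∃ n, mvle (upow u n) x} := by
  constructor
  · constructor
    · exact ⟨0, mvle_refl top⟩
    · rintro a b ⟨n, hn⟩ ⟨m, hm⟩
      refine ⟨n + m, ?_⟩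
      rw [upow_add]
      have h1 : mvle (odot (upow u n) (upow u m)) (odot a (imp a b)) :=
        mvle_trans (odot_mono_left _ hn) (odot_mono_right _ hm)
      exact mvle_trans h1 (odot_imp_le a b)
  · rintro a ⟨n, hn⟩
    have htop : mvle top (τ a) := by
      have h2 := tau_mono h hn
      rwa [tau_upow h hu n] at h2
    exact ⟨0, htop⟩

lemma comparable {τ : A → A} (h : IsSMMV τ) (hsi : SubdirIrrSMV τ) (a : A) :
    mvle a (τ a) ∨ mvle (τ a) a := by
  by_contra hc
  push_neg at hc
  obtain ⟨hu, hv⟩ := hc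
  have huk : τ (imp a (τ a)) = top := by rw [tau_imp h, tau_idem h, imp_self]
  have hvk : τ (imp (τ a) a) = top := by rw [tau_imp h, tau_idem h, imp_self]
  obtain ⟨F, hF, hFne, hmin⟩ := hsi
  have hGu := genFilter_tauFilter h huk
  have hGv := genFilter_tauFilter h hvk
  have hGune : {x : A | ∃ n, mvle (upow (imp a (τ a)) n) x} ≠ ({top} : Set A) := by
    intro he
    have hmem : imp a (τ a) ∈ {x : A | ∃ n, mvle (upow (imp a (τ a)) n) x} :=
      ⟨1, by rw [upow_one]; exact mvle_refl _⟩
    rw [he] at hmem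
    exact hu hmem
  have hGvne : {x : A | ∃ n, mvle (upow (imp (τ a) a) n) x} ≠ ({top} : Set A) := by
    intro he
    have hmem : imp (τ a) a ∈ {x : A | ∃ n, mvle (upow (imp (τ a) a) n) x} :=
      ⟨1, by rw [upow_one]; exact mvle_refl _⟩
    rw [he] at hmem
    exact hv hmem
  have hwex : ∃ w ∈ F, w ≠ top := by
    by_contra hno
    push_neg at hno
    apply hFne
    ext x
    simp only [Set.mem_singleton_iff]
    constructor
    · intro hx; exact hno x hx
    · intro hx; rw [hx]; exact hF.1.top_mem
  obtain ⟨w, hwF, hwne⟩ := hwex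
  obtain ⟨n, hn⟩ := hmin _ hGu hGune hwF
  obtain ⟨m, hm⟩ := hmin _ hGv hGvne hwF
  have hsup : mvsup (imp a (τ a)) (imp (τ a) a) = top := prelin a (τ a)
  have h1 : mvsup (upow (imp a (τ a)) n) (imp (τ a) a) = top := upow_sup hsup n
  have h2 : mvsup (imp (τ a) a) (upow (imp a (τ a)) n) = top := by rw [mvsup_comm]; exact h1
  have h3 : mvsup (upow (imp (τ a) a) m) (upow (imp a (τ a)) n) = top := upow_sup h2 m
  have h4 : mvle top w := by rw [← h3]; exact mvsup_le hm hn
  exact hwne (eq_top_of_top_le h4)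

end MV

/-- canonical unique representation of elements of a subdirectly
irreducible SMMV-algebra: there are unique `b ∈ τ(A)`, `c ∈ F_τ(A)` with exactly
one of: (a) `a = b ⊙ c` with `c` greatest such, or (b) `a = c → b` with `b < c < 1`. -/
theorem unique_representation {A : Type*} [MV A] (τ : A → A)
    (h : IsSMMV τ) (hsi : SubdirIrrSMV τ) (a : A) :
    ∃ b c : A, (b ∈ Set.range τ ∧ c ∈ tauKernel τ ∧
      Xor' (a = odot b c ∧ ∀ c' : A, a = odot b c' → mvle c' c)
           (a = imp c b ∧ mvlt b c ∧ mvlt c top)) ∧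
      ∀ b' c' : A, (b' ∈ Set.range τ ∧ c' ∈ tauKernel τ ∧
        Xor' (a = odot b' c' ∧ ∀ c'' : A, a = odot b' c'' → mvle c'' c')
             (a = imp c' b' ∧ mvlt b' c' ∧ mvlt c' top)) →
        b' = b ∧ c' = c := by
  classical
  by_cases hle : mvle a (τ a)
  · -- case (a): a ≤ τ a
    refine ⟨τ a, imp (τ a) a, ⟨⟨a, rfl⟩, ?_, ?_⟩, ?_⟩
    · show τ (imp (τ a) a) = top
      rw [tau_imp h, tau_idem h, MV.imp_self]
    · refine Or.inl ⟨⟨(div_eq hle).symm, ?_⟩, ?_⟩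
      · intro c' hc'
        have h1 := resid.mp (mvle_refl (odot (τ a) c'))
        rwa [← hc'] at h1
      · rintro ⟨ha', hbc, hct⟩
        have ha2 : a = oplus (mvneg (imp (τ a) a)) (τ a) := ha'
        have hta : mvle (τ a) a := by
          have h1 := le_oplus_self (τ a) (mvneg (imp (τ a) a))
          rwa [← ha2] at h1
        have heq : a = τ a := mvle_antisymm hle hta
        apply hct.2
        show imp (τ a) a = top
        rw [← heq]
        exact MV.imp_self a
    · rintro b' c' ⟨⟨w, hw⟩, hc'k, hx'⟩
      have hck : τ c' = top := hc'k
      have hb't : τ b' = b' := by rw [← hw, tau_idem h]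
      rcases hx' with ⟨⟨ha', hgr'⟩, _⟩ | ⟨⟨ha', hlt1, hlt2⟩, _⟩
      · have hb'e : b' = τ a := by
          have h1 : τ a = odot (τ b') (τ c') := by rw [ha', tau_odot h]
          rw [hb't, hck, odot_top] at h1
          exact h1.symm
        refine ⟨hb'e, ?_⟩
        have ha2 := ha'
        rw [hb'e] at ha2
        apply mvle_antisymm
        · have h1 := resid.mp (mvle_refl (odot (τ a) c'))
          rwa [← ha2] at h1
        · refine hgr' _ ?_
          rw [hb'e]
          exact (div_eq hle).symm
      · exfalso
        have hb'e : b' = τ a := by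
          have h1 : τ a = imp (τ c') (τ b') := by rw [ha', tau_imp h]
          rw [hb't, hck, imp_top_left] at h1
          exact h1.symm
        have ha2 : a = oplus (mvneg c') b' := ha'
        have hta : mvle (τ a) a := by
          have h1 := le_oplus_self b' (mvneg c')
          rw [← ha2] at h1
          rwa [hb'e] at h1
        have heq : a = τ a := mvle_antisymm hle hta
        apply hlt2.2
        have hcb : mvle b' c' := hlt1.1
        have habs := absorb (X := mvneg c') (Y := b') (mvle_neg hcb)
        have hc'eq : c' = imp a b' := by
          rw [ha2, ← neg_odot_neg, habs, mvneg_mvneg]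
        rw [hc'eq, hb'e, ← heq]
        exact MV.imp_self a
  · -- case (b): τ a < a
    have hge : mvle (τ a) a := (comparable h hsi a).resolve_left hle
    have hne : τ a ≠ a := fun e => hle (by rw [e]; exact mvle_refl a)
    refine ⟨τ a, imp a (τ a), ⟨⟨a, rfl⟩, ?_, ?_⟩, ?_⟩
    · show τ (imp a (τ a)) = top
      rw [tau_imp h, tau_idem h, MV.imp_self]
    · refine Or.inr ⟨⟨(mvsup_eq_left hge).symm, ⟨le_oplus_self (τ a) (mvneg a), ?_⟩,
        ⟨mvle_top _, hle⟩⟩, ?_⟩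
      · intro e
        have ha2 : a = imp (imp a (τ a)) (τ a) := (mvsup_eq_left hge).symm
        rw [← e, MV.imp_self] at ha2
        apply hne
        rw [ha2]
        exact h.1.map_top
      · rintro ⟨ha', _⟩
        have h1 := odot_le_left (τ a) (imp a (τ a))
        rw [← ha'] at h1
        exact hle h1
    · rintro b' c' ⟨⟨w, hw⟩, hc'k, hx'⟩
      have hck : τ c' = top := hc'k
      have hb't : τ b' = b' := by rw [← hw, tau_idem h]
      rcases hx' with ⟨⟨ha', _⟩, _⟩ | ⟨⟨ha', hlt1, hlt2⟩, _⟩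
      · exfalso
        have hb'e : b' = τ a := by
          have h1 : τ a = odot (τ b') (τ c') := by rw [ha', tau_odot h]
          rw [hb't, hck, odot_top] at h1
          exact h1.symm
        have h1 := odot_le_left b' c'
        rw [← ha'] at h1
        rw [hb'e] at h1
        exact hle h1
      · have hb'e : b' = τ a := by
          have h1 : τ a = imp (τ c') (τ b') := by rw [ha', tau_imp h]
          rw [hb't, hck, imp_top_left] at h1
          exact h1.symm
        refine ⟨hb'e, ?_⟩
        have hcb : mvle b' c' := hlt1.1
        have habs := absorb (X := mvneg c') (Y := b') (mvle_neg hcb)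
        have ha2 : a = oplus (mvneg c') b' := ha'
        have hc'eq : c' = imp a b' := by
          rw [ha2, ← neg_odot_neg, habs, mvneg_mvneg]
        rw [hc'eq, hb'e]
end

section
/- For every MV-algebra A, the diagonalization D(A) = (A × A, τ_A), with τ_A(a,b) = (a,a), is an SMMV-algebra, and for every SMMV-algebra (A, τ) the map Φ: a ↦ (τ(a), a) is an embedding of (A, τ) into D(A). -/
open MV

/-- The diagonal operator of `D(A) = (A × A, τ_A)`, `τ_A (a,b) = (a,a)`. -/
def DTau {X : Type*} (p : X × X) : X × X := (p.1, p.1)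

section Aux

variable {A : Type*} [MV A]

lemma MV.neg_top_s13 : (mvneg top : A) = 0 := mvneg_mvneg 0

lemma MV.zero_oplus_s13 (x : A) : oplus 0 x = x := by
  rw [oplus_comm, oplus_zero]

lemma MV.top_oplus_s13 (x : A) : oplus (top : A) x = top := by
  rw [oplus_comm]; exact oplus_top x

lemma MV.neg_oplus_self_s13 (x : A) : oplus (mvneg x) x = top := by
  have h := luk x (top : A)
  simp only [top] at h ⊢
  simp only [oplus_top, mvneg_mvneg, zero_oplus_s13] at h
  exact h.symm

/-- Key MV identity: `y ⊖ (x ⊙ y) = (x ⊕ y) ⊖ x`. -/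
lemma MV.ominus_odot (x y : A) :
    ominus y (odot x y) = mvneg (oplus (mvneg (oplus x y)) x) := by
  have h := luk (mvneg y) x
  rw [mvneg_mvneg] at h
  unfold ominus odot
  rw [oplus_comm (mvneg y) (mvneg (oplus (mvneg x) (mvneg y))), ← h,
    oplus_comm y x]

/-- Key MV identity: `x ⊕ (y ⊖ (x ⊙ y)) = x ⊕ y`. -/
lemma MV.oplus_ominus_odot (x y : A) :
    oplus x (ominus y (odot x y)) = oplus x y := by
  have h := luk (oplus x y) x
  rw [show oplus (mvneg x) (oplus x y) = top from by
      rw [← oplus_assoc, neg_oplus_self_s13, top_oplus_s13],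
    neg_top_s13, zero_oplus_s13] at h
  rw [ominus_odot, oplus_comm]
  exact h

lemma MV.prod_fst_oplus {B : Type*} [MV B] (x y : A × B) :
    (oplus x y).1 = oplus x.1 y.1 := rfl

lemma MV.prod_top : (top : A × A) = ((top : A), (top : A)) := rfl

end Aux

/-- `D(A)` is an SMMV-algebra, and for every SMMV-algebra `(A, τ)`,
the map `Φ : a ↦ (τ a, a)` is an embedding of `(A, τ)` into `D(A)`. -/
theorem diagonalization_embedding {A : Type*} [MV A] :
    IsSMMV (DTau : A × A → A × A) ∧
    ∀ τ : A → A, IsSMMV τ →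
      (Function.Injective (fun a : A => ((τ a, a) : A × A)) ∧
       IsMVHom (fun a : A => ((τ a, a) : A × A)) ∧
       ∀ a : A, ((τ (τ a), τ a) : A × A) = DTau ((τ a, a) : A × A)) := by
  constructor
  · refine ⟨⟨?_, ?_, ?_, ?_⟩, ?_⟩
    · rfl
    · intro x y
      have key : oplus x.1 (ominus y (odot x y)).1 = oplus x.1 y.1 := by
        have : (ominus y (odot x y)).1 = ominus y.1 (odot x.1 y.1) := rfl
        rw [this]
        exact MV.oplus_ominus_odot x.1 y.1
      show ((oplus x y).1, (oplus x y).1) =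
        oplus (DTau x) (DTau (ominus y (odot x y)))
      exact Prod.ext key.symm key.symm
    · intro x; rfl
    · intro x y; rfl
    · intro x y; rfl
  · intro τ hτ
    obtain ⟨hs, hadd⟩ := hτ
    have hz : τ 0 = 0 := by
      have : τ 0 = τ (mvneg top) := by rw [MV.neg_top_s13]
      rw [this, hs.map_neg, hs.map_top, MV.neg_top_s13]
    have hidem : ∀ a : A, τ (τ a) = τ a := by
      intro a
      have h := hs.tau_fix a 0
      rwa [hz, oplus_zero] at h
    refine ⟨?_, ⟨?_, ?_, ?_⟩, ?_⟩
    · intro a b hab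
      exact congrArg Prod.snd hab
    · intro x y
      exact Prod.ext (hadd x y) rfl
    · intro x
      exact Prod.ext (hs.map_neg x) rfl
    · exact Prod.ext hz rfl
    · intro a
      exact Prod.ext (hidem a) rfl
end
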